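/- Let H₁ and H₂ be Hermitian n×n complex matrices with [H₁, H₂] = 0, set H = H₁ + H₂, and let A, B be any n×n complex matrices. Then for all t ∈ ℝ: ‖ [ exp(i t H) A exp(−i t H), B ] ‖ ≤ ‖[A, B]‖ + 2|t| · ( ‖[H₂, A]‖ · ‖B‖ + ‖[H₁, B]‖ · ‖A‖ ). In particular, if [A, B] = 0, then the commutator of the Heisenberg-evolved operator exp(itH)·A·exp(−itH) with B grows at most linearly in |t|, with a prefactor controlled by the commutators ‖[H₂, A]‖ and ‖[H₁, B]‖. -/

import Mathlib

open Matrix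
open scoped Matrix.Norms.L2Operator

open NormedSpace

variable {n : ℕ}

lemma exp_I_smul_unitary (K : Matrix (Fin n) (Fin n) ℂ) (hK : K.IsHermitian) (t : ℝ) :
    exp ((Complex.I * (t:ℂ)) • K) ∈ unitary (Matrix (Fin n) (Fin n) ℂ) := by
  have h1 : IsSelfAdjoint K := hK
  have h2 : IsSelfAdjoint ((t:ℂ) • K) :=
    IsSelfAdjoint.smul (r := (t:ℂ)) (Complex.conj_ofReal t) h1
  have h3 : Complex.I • ((t:ℂ) • K) ∈ skewAdjoint (Matrix (Fin n) (Fin n) ℂ) :=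
    h2.smul_mem_skewAdjoint Complex.conj_I
  rw [show (Complex.I * (t:ℂ)) • K = Complex.I • ((t:ℂ) • K) from by rw [smul_smul]]
  set x := Complex.I • ((t:ℂ) • K) with hx
  have hs : star x = -x := skewAdjoint.mem_iff.mp h3
  have hst : star (exp x) = exp (-x) := by
    rw [← hs]; exact (Matrix.exp_conjTranspose x).symm
  rw [Unitary.mem_iff, hst, ← Matrix.exp_add_of_commute _ _ (Commute.refl x).neg_left,
    ← Matrix.exp_add_of_commute _ _ (Commute.refl x).neg_right, neg_add_cancel, add_neg_cancel,
    exp_zero]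
  exact ⟨rfl, rfl⟩

lemma real_smul_eq (K : Matrix (Fin n) (Fin n) ℂ) (s : ℝ) :
    s • (Complex.I • K) = (Complex.I * (s:ℂ)) • K := by
  rw [← Complex.coe_smul, smul_smul, mul_comm]

lemma exp_real_eq (M : Matrix (Fin n) (Fin n) ℂ) :
    exp M = exp M := rfl

lemma conj_sub_norm_le (K A : Matrix (Fin n) (Fin n) ℂ) (hK : K.IsHermitian) (t : ℝ) :
    ‖exp ((Complex.I * (t:ℂ)) • K) * A * exp ((-(Complex.I * (t:ℂ))) • K) - A‖
      ≤ |t| * ‖K * A - A * K‖ := by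
  set M₀ : Matrix (Fin n) (Fin n) ℂ := Complex.I • K with hM₀
  set f : ℝ → Matrix (Fin n) (Fin n) ℂ :=
    fun s => exp (s • M₀) * A * exp (s • (-M₀)) with hf
  have hexp : ∀ s : ℝ, exp (s • M₀) = exp ((Complex.I * (s:ℂ)) • K) := by
    intro s; rw [exp_real_eq, real_smul_eq]
  have hexp' : ∀ s : ℝ, exp (s • (-M₀)) = exp ((-(Complex.I * (s:ℂ))) • K) := by
    intro s
    rw [exp_real_eq, show s • (-M₀) = (-(Complex.I * (s:ℂ))) • K from by
      rw [smul_neg, real_smul_eq, neg_smul]]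
  have hU : ∀ s : ℝ, exp (s • M₀) ∈ unitary (Matrix (Fin n) (Fin n) ℂ) := fun s => by
    rw [hexp]; exact exp_I_smul_unitary K hK s
  have hV : ∀ s : ℝ, exp (s • (-M₀)) ∈ unitary (Matrix (Fin n) (Fin n) ℂ) := fun s => by
    rw [hexp']
    rw [show (-(Complex.I * (s:ℂ))) • K = (Complex.I * ((-s : ℝ):ℂ)) • K from by push_cast; ring_nf]
    exact exp_I_smul_unitary K hK (-s)
  -- derivative
  have hderiv : ∀ s : ℝ, HasDerivAt f
      (exp (s • M₀) * (M₀ * A - A * M₀) * exp (s • (-M₀))) s := by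
    intro s
    have h1 : HasDerivAt (fun u : ℝ => exp (u • M₀)) (exp (s • M₀) * M₀) s :=
      hasDerivAt_exp_smul_const M₀ s
    have h2 : HasDerivAt (fun u : ℝ => exp (u • (-M₀))) (exp (s • (-M₀)) * (-M₀)) s :=
      hasDerivAt_exp_smul_const (-M₀) s
    have h3 := (h1.mul_const A).mul h2
    refine HasDerivAt.congr_deriv h3 ?_
    have hc : exp (s • (-M₀)) * M₀ = M₀ * exp (s • (-M₀)) :=
      ((((Commute.refl M₀).neg_right.smul_right s).exp_right).symm).eq
    rw [mul_neg, hc]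
    noncomm_ring
  have hbound : ∀ s : ℝ,
      ‖exp (s • M₀) * (M₀ * A - A * M₀) * exp (s • (-M₀))‖ ≤ ‖K * A - A * K‖ := by
    intro s
    rw [CStarRing.norm_mul_mem_unitary _ (hV s), CStarRing.norm_mem_unitary_mul _ (hU s)]
    have : M₀ * A - A * M₀ = Complex.I • (K * A - A * K) := by
      rw [hM₀, smul_mul_assoc, mul_smul_comm, smul_sub]
    rw [this, norm_smul, Complex.norm_I, one_mul]
  have key := Convex.norm_image_sub_le_of_norm_hasDerivWithin_le
    (f := f) (C := ‖K * A - A * K‖) (s := Set.univ)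
    (fun s _ => (hderiv s).hasDerivWithinAt) (fun s _ => hbound s)
    convex_univ (Set.mem_univ 0) (Set.mem_univ t)
  have hf0 : f 0 = A := by simp [hf]
  have hft : f t = exp ((Complex.I * (t:ℂ)) • K) * A * exp ((-(Complex.I * (t:ℂ))) • K) := by
    rw [hf]; simp only; rw [hexp, hexp']
  rw [hf0, hft] at key
  simpa [mul_comm] using key

/-- **Linear-in-time commutator growth from almost-commuting generators.**
Let `H₁, H₂` be commuting Hermitian matrices and `H = H₁ + H₂`.  Then for any matrices
`A, B` and all `t ∈ ℝ`, the commutator of the Heisenberg-evolved `exp(itH) A exp(−itH)`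
with `B` is bounded (in `ℓ² → ℓ²` operator norm) by
`‖[A,B]‖ + 2|t|(‖[H₂,A]‖‖B‖ + ‖[H₁,B]‖‖A‖)`. -/
theorem norm_commutator_heisenberg_le (n : ℕ)
    (H₁ H₂ : Matrix (Fin n) (Fin n) ℂ)
    (hH₁ : H₁.IsHermitian) (hH₂ : H₂.IsHermitian)
    (hcomm : H₁ * H₂ - H₂ * H₁ = 0)
    (H : Matrix (Fin n) (Fin n) ℂ) (hH : H = H₁ + H₂)
    (A B : Matrix (Fin n) (Fin n) ℂ) :
    ∀ t : ℝ,
      ‖(NormedSpace.exp ((Complex.I * (t : ℂ)) • H) * A *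
            NormedSpace.exp ((-(Complex.I * (t : ℂ))) • H)) * B -
        B * (NormedSpace.exp ((Complex.I * (t : ℂ)) • H) * A *
            NormedSpace.exp ((-(Complex.I * (t : ℂ))) • H))‖
      ≤ ‖A * B - B * A‖ +
        2 * |t| * (‖H₂ * A - A * H₂‖ * ‖B‖ + ‖H₁ * B - B * H₁‖ * ‖A‖) := by
  intro t
  set c : ℂ := Complex.I * (t : ℂ) with hc
  have hcm : Commute H₁ H₂ := sub_eq_zero.mp hcomm
  set U₁ := exp (c • H₁) with hU₁def
  set U₂ := exp (c • H₂) with hU₂def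
  set V₁ := exp ((-c) • H₁) with hV₁def
  set V₂ := exp ((-c) • H₂) with hV₂def
  -- unitarity
  have hU₁u : U₁ ∈ unitary (Matrix (Fin n) (Fin n) ℂ) := exp_I_smul_unitary H₁ hH₁ t
  have hU₂u : U₂ ∈ unitary (Matrix (Fin n) (Fin n) ℂ) := exp_I_smul_unitary H₂ hH₂ t
  have hnegc : (-c) = Complex.I * ((-t : ℝ) : ℂ) := by rw [hc]; push_cast; ring
  have hV₁u : V₁ ∈ unitary (Matrix (Fin n) (Fin n) ℂ) := by
    rw [hV₁def, hnegc]; exact exp_I_smul_unitary H₁ hH₁ (-t)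
  have hV₂u : V₂ ∈ unitary (Matrix (Fin n) (Fin n) ℂ) := by
    rw [hV₂def, hnegc]; exact exp_I_smul_unitary H₂ hH₂ (-t)
  -- exp factorization
  have hcomm12 : Commute (c • H₁) (c • H₂) := (hcm.smul_left c).smul_right c
  have hcomm21 : Commute ((-c) • H₂) ((-c) • H₁) := (hcm.symm.smul_left _).smul_right _
  have hexpH : exp (c • H) = U₁ * U₂ := by
    rw [hH, smul_add, Matrix.exp_add_of_commute _ _ hcomm12]
  have hexpH' : exp ((-c) • H) = V₂ * V₁ := by
    rw [hH, smul_add, add_comm, Matrix.exp_add_of_commute _ _ hcomm21]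
  have hU₁V₁ : U₁ * V₁ = 1 := by
    rw [hU₁def, hV₁def, neg_smul, ← Matrix.exp_add_of_commute _ _ (Commute.refl (c • H₁)).neg_right,
      add_neg_cancel, exp_zero]
  set A' := U₂ * A * V₂ with hA'def
  set B' := V₁ * B * U₁ with hB'def
  set X := exp (c • H) * A * exp ((-c) • H) with hXdef
  have hX : X = U₁ * A' * V₁ := by
    rw [hXdef, hexpH, hexpH', hA'def]; noncomm_ring
  have hc1 : ∀ Y : Matrix (Fin n) (Fin n) ℂ, U₁ * (V₁ * Y) = Y := fun Y => by
    rw [← mul_assoc, hU₁V₁, one_mul]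
  have e1 : X * B - B * X = U₁ * (A' * B' - B' * A') * V₁ := by
    rw [hX]
    simp only [mul_sub, sub_mul]
    congr 1
    · simp [hB'def, mul_assoc, hU₁V₁]
    · simp [hB'def, mul_assoc, hc1]
  have e2 : ‖X * B - B * X‖ = ‖A' * B' - B' * A'‖ := by
    rw [e1, CStarRing.norm_mul_mem_unitary _ hV₁u, CStarRing.norm_mem_unitary_mul _ hU₁u]
  -- bounds
  have hA' : ‖A' - A‖ ≤ |t| * ‖H₂ * A - A * H₂‖ := conj_sub_norm_le H₂ A hH₂ t
  have hB'bound : ‖B' - B‖ ≤ |t| * ‖H₁ * B - B * H₁‖ := by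
    have := conj_sub_norm_le H₁ B hH₁ (-t)
    rw [abs_neg] at this
    rw [show (Complex.I * ((-t : ℝ) : ℂ)) = -c from hnegc.symm, neg_neg] at this
    exact this
  have hBnorm : ‖B'‖ = ‖B‖ := by
    rw [hB'def, CStarRing.norm_mul_mem_unitary _ hU₁u, CStarRing.norm_mem_unitary_mul _ hV₁u]
  have hD : A' * B' - B' * A' =
      ((A' - A) * B' - B' * (A' - A)) + (A * (B' - B) - (B' - B) * A) + (A * B - B * A) := by
    noncomm_ring
  have h₁ : ‖(A' - A) * B' - B' * (A' - A)‖ ≤ 2 * (‖A' - A‖ * ‖B'‖) := by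
    calc ‖(A' - A) * B' - B' * (A' - A)‖
        ≤ ‖(A' - A) * B'‖ + ‖B' * (A' - A)‖ := norm_sub_le _ _
      _ ≤ ‖A' - A‖ * ‖B'‖ + ‖B'‖ * ‖A' - A‖ :=
          add_le_add (norm_mul_le _ _) (norm_mul_le _ _)
      _ = 2 * (‖A' - A‖ * ‖B'‖) := by ring
  have h₂ : ‖A * (B' - B) - (B' - B) * A‖ ≤ 2 * (‖B' - B‖ * ‖A‖) := by
    calc ‖A * (B' - B) - (B' - B) * A‖
        ≤ ‖A * (B' - B)‖ + ‖(B' - B) * A‖ := norm_sub_le _ _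
      _ ≤ ‖A‖ * ‖B' - B‖ + ‖B' - B‖ * ‖A‖ :=
          add_le_add (norm_mul_le _ _) (norm_mul_le _ _)
      _ = 2 * (‖B' - B‖ * ‖A‖) := by ring
  have step : ‖A' * B' - B' * A'‖ ≤
      2 * (‖A' - A‖ * ‖B'‖) + 2 * (‖B' - B‖ * ‖A‖) + ‖A * B - B * A‖ := by
    rw [hD]
    exact (norm_add₃_le).trans (add_le_add (add_le_add h₁ h₂) le_rfl)
  have fin1 : 2 * (‖A' - A‖ * ‖B'‖) ≤ 2 * ((|t| * ‖H₂ * A - A * H₂‖) * ‖B‖) := by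
    rw [hBnorm]
    exact mul_le_mul_of_nonneg_left
      (mul_le_mul_of_nonneg_right hA' (norm_nonneg B)) (by norm_num)
  have fin2 : 2 * (‖B' - B‖ * ‖A‖) ≤ 2 * ((|t| * ‖H₁ * B - B * H₁‖) * ‖A‖) :=
    mul_le_mul_of_nonneg_left
      (mul_le_mul_of_nonneg_right hB'bound (norm_nonneg A)) (by norm_num)
  rw [e2]
  calc ‖A' * B' - B' * A'‖
      ≤ 2 * (‖A' - A‖ * ‖B'‖) + 2 * (‖B' - B‖ * ‖A‖) + ‖A * B - B * A‖ := step
    _ ≤ 2 * ((|t| * ‖H₂ * A - A * H₂‖) * ‖B‖) + 2 * ((|t| * ‖H₁ * B - B * H₁‖) * ‖A‖)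
          + ‖A * B - B * A‖ := add_le_add (add_le_add fin1 fin2) le_rfl
    _ = ‖A * B - B * A‖ +
        2 * |t| * (‖H₂ * A - A * H₂‖ * ‖B‖ + ‖H₁ * B - B * H₁‖ * ‖A‖) := by ring
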